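/- arXiv:0911.1032 — 6 statements merged into one kernel-verified Lean document; each statement's English description precedes it below -/
import Mathlib

section
/- Suppose ρ_ε is a smooth family of stationary probability densities for generators L_ε on a finite state space with ρ_ε = ρ0(1 + εh1 + o(ε)), where L0 satisfies detailed balance with respect to ρ0 > 0 and L_ε arises from rates λ_ε(x,y) = λ0(x,y)exp((βε/2)F1(x,y)) with F1 antisymmetric. Then the first-order correction satisfies L0 h1 = β w1 where w1(x) = ∑_{y≠x} λ0(x,y) F1(x,y). -/
/-- If `ρ_ε` is a differentiable family of stationary densities for
the perturbed rates `λ_ε(x,y) = λ0(x,y)exp((βε/2)F1(x,y))` with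
`ρ_ε = ρ0(1 + εh1 + o(ε))`, then the first-order correction satisfies
`L0 h1 = β w1`. -/
theorem first_order_stationary_correction
    {Ω : Type*} [Fintype Ω] [DecidableEq Ω]
    (lam0 : Ω → Ω → ℝ) (hlam0 : ∀ x y, 0 ≤ lam0 x y)
    (ρ0 : Ω → ℝ) (hρ0 : ∀ x, 0 < ρ0 x)
    (hdb : ∀ x y, ρ0 x * lam0 x y = ρ0 y * lam0 y x)
    (β : ℝ) (hβ : 0 < β)
    (F1 : Ω → Ω → ℝ) (hF1 : ∀ x y, F1 x y = - F1 y x)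
    (lam : ℝ → Ω → Ω → ℝ)
    (hlam : ∀ ε x y, lam ε x y = lam0 x y * Real.exp (β * ε / 2 * F1 x y))
    (ρ : ℝ → Ω → ℝ) (hρinit : ρ 0 = ρ0)
    (hstat : ∀ ε x, ∑ y ∈ Finset.univ.erase x,
        (ρ ε y * lam ε y x - ρ ε x * lam ε x y) = 0)
    (h1 : Ω → ℝ)
    (hderiv : ∀ x, HasDerivAt (fun ε => ρ ε x) (ρ0 x * h1 x) 0) :
    ∀ x, ∑ y ∈ Finset.univ.erase x, lam0 x y * (h1 y - h1 x)
        = β * ∑ y ∈ Finset.univ.erase x, lam0 x y * F1 x y := by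
  intro x
  -- derivative of each lam ε a b at 0
  have hl : ∀ a b : Ω, HasDerivAt (fun ε => lam ε a b)
      (lam0 a b * (β / 2 * F1 a b)) 0 := by
    intro a b
    have hfun : (fun ε => lam ε a b)
        = fun ε : ℝ => lam0 a b * Real.exp (ε * (β / 2 * F1 a b)) := by
      funext ε
      rw [hlam]
      ring_nf
    rw [hfun]
    have hlin : HasDerivAt (fun ε : ℝ => ε * (β / 2 * F1 a b))
        (β / 2 * F1 a b) 0 := by
      simpa using (hasDerivAt_id (0 : ℝ)).mul_const (β / 2 * F1 a b)
    have hexp := hlin.exp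
    simp only [zero_mul, Real.exp_zero, mul_one] at hexp
    simpa using hexp.const_mul (lam0 a b)
  have hlam00 : ∀ a b : Ω, lam 0 a b = lam0 a b := by
    intro a b; rw [hlam]; simp
  -- derivative of each summand
  have key : ∀ y : Ω, HasDerivAt
      (fun ε => ρ ε y * lam ε y x - ρ ε x * lam ε x y)
      ((ρ0 y * h1 y * lam0 y x + ρ0 y * (lam0 y x * (β / 2 * F1 y x)))
        - (ρ0 x * h1 x * lam0 x y + ρ0 x * (lam0 x y * (β / 2 * F1 x y)))) 0 := by
    intro y
    have hA := (hderiv y).mul (hl y x)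
    have hB := (hderiv x).mul (hl x y)
    rw [hlam00, hρinit] at hA hB
    exact hA.sub hB
  -- derivative of the (constant) sum is zero
  have hsumderiv : HasDerivAt
      (fun ε => ∑ y ∈ Finset.univ.erase x,
        (ρ ε y * lam ε y x - ρ ε x * lam ε x y))
      (∑ y ∈ Finset.univ.erase x,
        ((ρ0 y * h1 y * lam0 y x + ρ0 y * (lam0 y x * (β / 2 * F1 y x)))
          - (ρ0 x * h1 x * lam0 x y + ρ0 x * (lam0 x y * (β / 2 * F1 x y))))) 0 :=
    HasDerivAt.fun_sum fun y _ => key y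
  have hconst : (fun ε => ∑ y ∈ Finset.univ.erase x,
      (ρ ε y * lam ε y x - ρ ε x * lam ε x y)) = fun _ => (0 : ℝ) := by
    funext ε; exact hstat ε x
  have hzero : HasDerivAt
      (fun ε => ∑ y ∈ Finset.univ.erase x,
        (ρ ε y * lam ε y x - ρ ε x * lam ε x y)) 0 0 := by
    rw [hconst]; exact hasDerivAt_const 0 0
  have hD0 := hsumderiv.unique hzero
  -- rewrite the sum termwise using detailed balance and antisymmetry
  have hsum : ∑ y ∈ Finset.univ.erase x,
      (ρ0 x * (lam0 x y * (h1 y - h1 x)) - ρ0 x * (β * (lam0 x y * F1 x y))) = 0 := by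
    rw [← hD0]
    apply Finset.sum_congr rfl
    intro y _
    rw [hF1 y x]
    linear_combination (β / 2 * F1 x y - h1 y) * hdb y x
  have hfac : ρ0 x * ((∑ y ∈ Finset.univ.erase x, lam0 x y * (h1 y - h1 x))
      - β * ∑ y ∈ Finset.univ.erase x, lam0 x y * F1 x y) = 0 := by
    rw [Finset.sum_sub_distrib] at hsum
    simp only [← Finset.mul_sum] at hsum
    linear_combination hsum
  rcases mul_eq_zero.mp hfac with h | h
  · exact absurd h (ne_of_gt (hρ0 x))
  · linarith [sub_eq_zero.mp h]
end

section
/- Combining the previous facts: under irreducibility and exponential relaxation of the equilibrium semigroup, the first-order stationary correction admits the McLennan representation h1(x) = −β ∫_0^∞ (e^{tL0} w1)(x) dt, i.e. the stationary density satisfies ρ_ε(x) = ρ0(x)(1 − εβ ∫_0^∞ (e^{tL0}w1)(x) dt + o(ε)). -/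
open NormedSpace MeasureTheory

/-- McLennan representation of the first-order stationary
correction: under irreducibility and exponential relaxation of the equilibrium
semigroup, `h1(x) = −β ∫_0^∞ (e^{tL0} w1)(x) dt`. -/
theorem mclennan_first_order_representation
    {Ω : Type*} [Fintype Ω] [DecidableEq Ω] [Nonempty Ω]
    (lam0 : Ω → Ω → ℝ) (hlam0 : ∀ x y, 0 ≤ lam0 x y)
    (ρ0 : Ω → ℝ) (hρ0 : ∀ x, 0 < ρ0 x) (hnorm : ∑ x, ρ0 x = 1)
    (hdb : ∀ x y, ρ0 x * lam0 x y = ρ0 y * lam0 y x)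
    (β : ℝ) (hβ : 0 < β)
    (F1 : Ω → Ω → ℝ) (hF1 : ∀ x y, F1 x y = - F1 y x)
    (lam : ℝ → Ω → Ω → ℝ)
    (hlam : ∀ ε x y, lam ε x y = lam0 x y * Real.exp (β * ε / 2 * F1 x y))
    -- the generator as a matrix: off-diagonal entries `λ0(x,y)`, diagonal `−ξ0(x)`
    (L0 : Matrix Ω Ω ℝ)
    (hL0 : ∀ x y, L0 x y =
      if x = y then - ∑ z ∈ Finset.univ.erase x, lam0 x z else lam0 x y)
    -- irreducibility: the kernel of `L0` consists of the constants
    (hker : ∀ g : Ω → ℝ, Matrix.mulVec L0 g = 0 → ∃ c : ℝ, g = fun _ => c)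
    -- exponential relaxation: all nonzero eigenvalues have negative real part
    (hspec : ∀ μ ∈ spectrum ℂ (L0.map (Complex.ofReal)), μ = 0 ∨ μ.re < 0)
    (w1 : Ω → ℝ)
    (hw1 : ∀ x, w1 x = ∑ y ∈ Finset.univ.erase x, lam0 x y * F1 x y)
    -- the smooth family of stationary densities, `ρ_ε = ρ0(1 + ε h1 + o(ε))`
    (ρ : ℝ → Ω → ℝ) (hρinit : ρ 0 = ρ0)
    (hstat : ∀ ε x, ∑ y ∈ Finset.univ.erase x,
        (ρ ε y * lam ε y x - ρ ε x * lam ε x y) = 0)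
    (h1 : Ω → ℝ) (hmean : ∑ x, ρ0 x * h1 x = 0)
    (hderiv : ∀ x, HasDerivAt (fun ε => ρ ε x) (ρ0 x * h1 x) 0) :
    ∀ x : Ω, h1 x =
      - β * ∫ t in Set.Ioi (0 : ℝ), (Matrix.mulVec (exp (t • L0)) w1) x := by
  classical
  have hgenx : ∀ x, ∑ y ∈ Finset.univ.erase x, lam0 x y * (h1 y - h1 x) = β * w1 x := by
    intro x
    -- derivative of each `lam` factor
    have hlamderiv : ∀ y z : Ω, HasDerivAt (fun ε => lam ε y z)
        (lam0 y z * (β / 2 * F1 y z)) 0 := by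
      intro y z
      have h0 : HasDerivAt (fun ε : ℝ => β * ε / 2 * F1 y z) (β / 2 * F1 y z) 0 := by
        have := (((hasDerivAt_id (0:ℝ)).const_mul β).div_const 2).mul_const (F1 y z)
        simpa using this
      have h1' := (h0.exp).const_mul (lam0 y z)
      have : (fun ε => lam ε y z) = fun ε => lam0 y z * Real.exp (β * ε / 2 * F1 y z) :=
        funext fun ε => hlam ε y z
      rw [this]
      simpa using h1'
    have hterm : ∀ y : Ω, HasDerivAt
        (fun ε => ρ ε y * lam ε y x - ρ ε x * lam ε x y)
        ((ρ0 y * h1 y * lam0 y x + ρ0 y * (lam0 y x * (β / 2 * F1 y x)))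
          - (ρ0 x * h1 x * lam0 x y + ρ0 x * (lam0 x y * (β / 2 * F1 x y)))) 0 := by
      intro y
      have hA := (hderiv y).mul (hlamderiv y x)
      have hB := (hderiv x).mul (hlamderiv x y)
      have e1 : lam 0 y x = lam0 y x := by simp [hlam]
      have e2 : lam 0 x y = lam0 x y := by simp [hlam]
      have := hA.sub hB
      rw [e1, e2, hρinit] at this
      exact this
    have hsum := HasDerivAt.fun_sum (u := Finset.univ.erase x) (fun y (_ : y ∈ Finset.univ.erase x) => hterm y)
    have hzero : HasDerivAt (fun ε => ∑ y ∈ Finset.univ.erase x,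
        (ρ ε y * lam ε y x - ρ ε x * lam ε x y)) 0 0 := by
      have : (fun ε => ∑ y ∈ Finset.univ.erase x,
          (ρ ε y * lam ε y x - ρ ε x * lam ε x y)) = fun _ => (0:ℝ) :=
        funext fun ε => hstat ε x
      rw [this]; exact hasDerivAt_const _ _
    have hD := hsum.unique hzero
    -- simplify each summand using detailed balance and antisymmetry
    have hsimp : ∀ y ∈ Finset.univ.erase x,
        (ρ0 y * h1 y * lam0 y x + ρ0 y * (lam0 y x * (β / 2 * F1 y x)))
          - (ρ0 x * h1 x * lam0 x y + ρ0 x * (lam0 x y * (β / 2 * F1 x y)))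
        = ρ0 x * (lam0 x y * (h1 y - h1 x) - β * (lam0 x y * F1 x y)) := by
      intro y _
      have db := hdb y x
      have as := hF1 y x
      linear_combination (h1 y + β / 2 * F1 y x) * db + (β / 2 * ρ0 x * lam0 x y) * as
    rw [Finset.sum_congr rfl hsimp, ← Finset.mul_sum] at hD
    have h2 : ∑ y ∈ Finset.univ.erase x,
        (lam0 x y * (h1 y - h1 x) - β * (lam0 x y * F1 x y)) = 0 := by
      rcases mul_eq_zero.mp hD with h | h
      · exact absurd h (ne_of_gt (hρ0 x))
      · exact h
    rw [Finset.sum_sub_distrib, ← Finset.mul_sum, ← hw1 x] at h2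
    linarith
  -- generator equation in mulVec form
  have hgen : ∀ x, (L0.mulVec h1) x = β * w1 x := by
    intro x
    have : (L0.mulVec h1) x = ∑ y, L0 x y * h1 y := rfl
    rw [this, ← Finset.add_sum_erase _ _ (Finset.mem_univ x)]
    have e1 : ∀ y ∈ Finset.univ.erase x, L0 x y * h1 y = lam0 x y * h1 y := by
      intro y hy
      rw [hL0 x y, if_neg (fun h => (Finset.mem_erase.mp hy).1 h.symm)]
    rw [Finset.sum_congr rfl e1, hL0 x x, if_pos rfl, ← hgenx x]
    simp only [mul_sub, Finset.sum_sub_distrib, ← Finset.sum_mul, neg_mul]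
    ring
  -- w1 has zero mean w.r.t. ρ0
  have hw1mean : ∑ x, ρ0 x * w1 x = 0 := by
    have hfull : ∑ x, ρ0 x * w1 x = ∑ x, ∑ y, ρ0 x * lam0 x y * F1 x y := by
      refine Finset.sum_congr rfl fun x _ => ?_
      rw [hw1 x, Finset.mul_sum]
      rw [← Finset.add_sum_erase _ (fun y => ρ0 x * lam0 x y * F1 x y) (Finset.mem_univ x)]
      have : F1 x x = 0 := by have := hF1 x x; linarith
      simp [this, mul_assoc]
    have hanti : ∀ x y, ρ0 x * lam0 x y * F1 x y = -(ρ0 y * lam0 y x * F1 y x) := by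
      intro x y; rw [hdb x y, hF1 x y]; ring
    have h2 : ∑ x, ∑ y, ρ0 x * lam0 x y * F1 x y
        = -∑ x, ∑ y, ρ0 x * lam0 x y * F1 x y := by
      conv_lhs => rw [Finset.sum_comm]
      rw [← Finset.sum_neg_distrib]
      refine Finset.sum_congr rfl fun x _ => ?_
      rw [← Finset.sum_neg_distrib]
      exact Finset.sum_congr rfl fun y _ => hanti y x
    rw [hfull]; linarith [h2]
  -- the symmetrized generator
  set d : Ω → ℝ := fun x => Real.sqrt (ρ0 x) with hd_def
  have hd : ∀ x, 0 < d x := fun x => Real.sqrt_pos.mpr (hρ0 x)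
  have hdsq : ∀ x, d x * d x = ρ0 x := fun x => Real.mul_self_sqrt (hρ0 x).le
  set D : Matrix Ω Ω ℝ := Matrix.diagonal d with hD_def
  set Dinv : Matrix Ω Ω ℝ := Matrix.diagonal (fun x => (d x)⁻¹) with hDinv_def
  have hDDinv : D * Dinv = 1 := by
    rw [hD_def, hDinv_def, Matrix.diagonal_mul_diagonal]
    rw [show (fun x => d x * (d x)⁻¹) = fun _ => (1:ℝ) from
      funext fun x => mul_inv_cancel₀ (hd x).ne', Matrix.diagonal_one]
  have hDinvD : Dinv * D = 1 := by
    rw [hD_def, hDinv_def, Matrix.diagonal_mul_diagonal]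
    rw [show (fun x => (d x)⁻¹ * d x) = fun _ => (1:ℝ) from
      funext fun x => inv_mul_cancel₀ (hd x).ne', Matrix.diagonal_one]
  set S : Matrix Ω Ω ℝ := D * L0 * Dinv with hS_def
  have hSentry : ∀ x y, S x y = d x * L0 x y * (d y)⁻¹ := by
    intro x y
    rw [hS_def, hD_def, hDinv_def, Matrix.mul_diagonal, Matrix.diagonal_mul]
  have hρL : ∀ x y, ρ0 x * L0 x y = ρ0 y * L0 y x := by
    intro x y
    by_cases h : x = y
    · subst h; ring
    · rw [hL0 x y, hL0 y x, if_neg h, if_neg (fun h' => h h'.symm)]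
      exact hdb x y
  have hSsymm : ∀ x y, S x y = S y x := by
    intro x y
    rw [hSentry, hSentry]
    have h := hρL x y
    rw [← hdsq x, ← hdsq y] at h
    have hnex : d x ≠ 0 := (hd x).ne'
    have hney : d y ≠ 0 := (hd y).ne'
    field_simp
    linear_combination h
  have hS : S.IsHermitian := by
    show S.conjTranspose = S
    ext x y
    simp only [Matrix.conjTranspose_apply, star_trivial]
    exact hSsymm y x
  set μ : Ω → ℝ := hS.eigenvalues with hμ_def
  set U : Matrix Ω Ω ℝ := (Matrix.IsHermitian.eigenvectorUnitary hS : Matrix Ω Ω ℝ) with hU_def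
  have hUstar : U * star U = 1 :=
    (Matrix.mem_unitaryGroup_iff).mp (Matrix.IsHermitian.eigenvectorUnitary hS).2
  have hstarU : star U * U = 1 :=
    (Matrix.mem_unitaryGroup_iff').mp (Matrix.IsHermitian.eigenvectorUnitary hS).2
  have hspecthm : S = U * Matrix.diagonal μ * star U := by
    have h := hS.spectral_theorem
    rwa [RCLike.ofReal_real_eq_id, Function.id_comp] at h
  have hSU : S * U = U * Matrix.diagonal μ := by
    rw [hspecthm, mul_assoc (U * Matrix.diagonal μ) (star U) U, hstarU, mul_one]
  -- eigen-equation for columns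
  have hScol : ∀ i x, ∑ y, S x y * U y i = μ i * U x i := by
    intro i x
    have h := congrFun (congrFun hSU x) i
    rw [Matrix.mul_apply, Matrix.mul_diagonal] at h
    rw [h]; ring
  have hcolnorm : ∀ i, ∑ x, U x i * U x i = 1 := by
    intro i
    have h := congrFun (congrFun hstarU i) i
    rw [Matrix.mul_apply] at h
    simp only [Matrix.one_apply_eq] at h
    rw [← h]
    exact Finset.sum_congr rfl fun x _ => by rw [Matrix.star_apply, star_trivial]
  have hcolne : ∀ i, ∃ x, U x i ≠ 0 := by
    intro i
    by_contra h
    push_neg at h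
    have := hcolnorm i
    simp only [h, mul_zero, Finset.sum_const_zero] at this
    exact one_ne_zero this.symm
  -- L0 in terms of S
  have hL0Dinv : L0 * Dinv = Dinv * S := by
    rw [hS_def]
    calc L0 * Dinv = 1 * (L0 * Dinv) := by rw [one_mul]
    _ = Dinv * (D * L0 * Dinv) := by rw [← hDinvD]; noncomm_ring
  have hL0col : ∀ i, L0.mulVec (fun x => (d x)⁻¹ * U x i)
      = fun x => μ i * ((d x)⁻¹ * U x i) := by
    intro i
    have hv : (fun x => (d x)⁻¹ * U x i) = Dinv.mulVec (fun x => U x i) := by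
      funext x; rw [hDinv_def, Matrix.mulVec_diagonal]
    rw [hv, Matrix.mulVec_mulVec, hL0Dinv, ← Matrix.mulVec_mulVec]
    funext x
    have hSv : S.mulVec (fun y => U y i) = fun y => μ i * U y i := by
      funext y
      rw [Matrix.mulVec, dotProduct]
      exact hScol i y
    rw [hSv, hDinv_def, Matrix.mulVec_diagonal]
    ring
  have hcase : ∀ i, μ i < 0 ∨ (μ i = 0 ∧ ∃ c : ℝ, ∀ x, U x i = c * d x) := by
    intro i
    by_cases hzero : μ i = 0
    · right
      refine ⟨hzero, ?_⟩
      have hv0 : L0.mulVec (fun x => (d x)⁻¹ * U x i) = 0 := by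
        rw [hL0col i, hzero]; funext x; simp
      obtain ⟨c, hc⟩ := hker _ hv0
      refine ⟨c, fun x => ?_⟩
      have hx : (d x)⁻¹ * U x i = c := congrFun hc x
      calc U x i = d x * ((d x)⁻¹ * U x i) := by
            rw [← mul_assoc, mul_inv_cancel₀ (hd x).ne', one_mul]
        _ = c * d x := by rw [hx]; ring
    · left
      obtain ⟨x0, hx0⟩ := hcolne i
      set vC : Ω → ℂ := fun x => ((d x)⁻¹ * U x i : ℝ) with hvC_def
      have hvCne : vC ≠ 0 := by
        intro h
        have h0 := congrFun h x0
        simp only [hvC_def, Pi.zero_apply, Complex.ofReal_eq_zero] at h0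
        rcases mul_eq_zero.mp h0 with h' | h'
        · exact (inv_ne_zero (hd x0).ne') h'
        · exact hx0 h'
      have heq : ((μ i : ℂ) • (1 : Matrix Ω Ω ℂ) - L0.map Complex.ofReal).mulVec vC = 0 := by
        funext x
        rw [Matrix.sub_mulVec, Matrix.smul_mulVec, Matrix.one_mulVec]
        have hre := congrFun (hL0col i) x
        have hM : (L0.map Complex.ofReal).mulVec vC x
            = ((L0.mulVec (fun y => (d y)⁻¹ * U y i)) x : ℝ) := by
          simp only [Matrix.mulVec, dotProduct, Matrix.map_apply, hvC_def]
          push_cast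
          rfl
        simp only [Pi.sub_apply, Pi.smul_apply, Pi.zero_apply, smul_eq_mul]
        rw [hM, hre]
        simp only [hvC_def]
        push_cast
        ring
      have hdet0 : ((μ i : ℂ) • (1 : Matrix Ω Ω ℂ) - L0.map Complex.ofReal).det = 0 :=
        (Matrix.exists_mulVec_eq_zero_iff).mp ⟨vC, hvCne, heq⟩
      have hmem : (μ i : ℂ) ∈ spectrum ℂ (L0.map Complex.ofReal) := by
        rw [spectrum.mem_iff]
        intro hUnit
        rw [Algebra.algebraMap_eq_smul_one, Matrix.isUnit_iff_isUnit_det, hdet0] at hUnit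
        exact hUnit.ne_zero rfl
      rcases hspec _ hmem with h | h
      · exact absurd (Complex.ofReal_eq_zero.mp h) hzero
      · simpa using h
  set b : Ω → ℝ := fun i => ∑ y, U y i * (d y * w1 y) with hb_def
  set a : Ω → ℝ := fun i => ∑ y, U y i * (d y * h1 y) with ha_def
  have hSD : S * D = D * L0 := by
    rw [hS_def, mul_assoc (D * L0) Dinv D, hDinvD, mul_one]
  have hSDh1 : ∀ z, ∑ y, S z y * (d y * h1 y) = d z * (β * w1 z) := by
    intro z
    have e : ∀ y, S z y * (d y * h1 y) = (S * D) z y * h1 y := by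
      intro y; rw [hD_def, Matrix.mul_diagonal]; ring
    rw [Finset.sum_congr rfl (fun y _ => e y), hSD]
    have e2 : ∀ y, (D * L0) z y * h1 y = d z * (L0 z y * h1 y) := by
      intro y; rw [hD_def, Matrix.diagonal_mul]; ring
    rw [Finset.sum_congr rfl (fun y _ => e2 y), ← Finset.mul_sum]
    rw [show ∑ y, L0 z y * h1 y = L0.mulVec h1 z from rfl, hgen z]
  have hμab : ∀ i, μ i * a i = β * b i := by
    intro i
    rw [ha_def, hb_def, Finset.mul_sum, Finset.mul_sum]
    calc ∑ y, μ i * (U y i * (d y * h1 y))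
        = ∑ y, (∑ z, S y z * U z i) * (d y * h1 y) := by
          refine Finset.sum_congr rfl fun y _ => ?_
          rw [hScol i y]; ring
      _ = ∑ z, U z i * ∑ y, S z y * (d y * h1 y) := by
          simp only [Finset.sum_mul]
          rw [Finset.sum_comm]
          refine Finset.sum_congr rfl fun z _ => ?_
          rw [Finset.mul_sum]
          refine Finset.sum_congr rfl fun y _ => ?_
          rw [hSsymm y z]; ring
      _ = ∑ z, β * (U z i * (d z * w1 z)) := by
          refine Finset.sum_congr rfl fun z _ => ?_
          rw [hSDh1 z]; ring
  have hcoef0 : ∀ i (c : ℝ), (∀ x, U x i = c * d x) → b i = 0 ∧ a i = 0 := by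
    intro i c hc
    constructor
    · rw [hb_def]
      calc ∑ y, U y i * (d y * w1 y) = ∑ y, c * (ρ0 y * w1 y) := by
            refine Finset.sum_congr rfl fun y _ => ?_
            rw [hc y, ← hdsq y]; ring
        _ = 0 := by rw [← Finset.mul_sum, hw1mean, mul_zero]
    · rw [ha_def]
      calc ∑ y, U y i * (d y * h1 y) = ∑ y, c * (ρ0 y * h1 y) := by
            refine Finset.sum_congr rfl fun y _ => ?_
            rw [hc y, ← hdsq y]; ring
        _ = 0 := by rw [← Finset.mul_sum, hmean, mul_zero]
  have hrep : ∀ x, h1 x = ∑ i, (d x)⁻¹ * (U x i * a i) := by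
    intro x
    have key : ∑ i, U x i * a i = d x * h1 x := by
      rw [ha_def]
      simp only [Finset.mul_sum]
      rw [Finset.sum_comm]
      have e : ∀ y, ∑ i, U x i * (U y i * (d y * h1 y))
          = (U * star U) x y * (d y * h1 y) := by
        intro y
        rw [Matrix.mul_apply, Finset.sum_mul]
        refine Finset.sum_congr rfl fun i _ => ?_
        rw [Matrix.star_apply, star_trivial]; ring
      rw [Finset.sum_congr rfl (fun y _ => e y), hUstar]
      simp [Matrix.one_apply]
    rw [← Finset.mul_sum, key, ← mul_assoc, inv_mul_cancel₀ (hd x).ne', one_mul]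
  -- units
  have hDdet : IsUnit D.det := IsUnit.of_mul_eq_one Dinv.det
    (by rw [← Matrix.det_mul, hDDinv, Matrix.det_one])
  have hDunit : IsUnit D := (Matrix.isUnit_iff_isUnit_det D).mpr hDdet
  have hUunit : IsUnit U := (Matrix.isUnit_iff_isUnit_det U).mpr
    (IsUnit.of_mul_eq_one (star U).det (by rw [← Matrix.det_mul, hUstar, Matrix.det_one]))
  have hDinv_eq : D⁻¹ = Dinv := Matrix.inv_eq_right_inv hDDinv
  have hUinv_eq : U⁻¹ = star U := Matrix.inv_eq_right_inv hUstar
  have hDSD : Dinv * S * D = L0 := by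
    rw [← hL0Dinv, mul_assoc, hDinvD, mul_one]
  have hexpdiag : ∀ t : ℝ, exp (t • Matrix.diagonal μ)
      = Matrix.diagonal (fun i => Real.exp (t * μ i)) := by
    intro t
    rw [← Matrix.diagonal_smul, Matrix.exp_diagonal]
    congr 1
    funext i
    simp [Pi.exp_def, smul_eq_mul, Real.exp_eq_exp_ℝ]
  have hexp : ∀ t : ℝ, exp (t • L0)
      = Dinv * (U * Matrix.diagonal (fun i => Real.exp (t * μ i)) * star U) * D := by
    intro t
    have h1t : t • L0 = D⁻¹ * (t • S) * D := by
      rw [hDinv_eq, Matrix.mul_smul, Matrix.smul_mul, hDSD]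
    have h2t : t • S = U * (t • Matrix.diagonal μ) * U⁻¹ := by
      rw [hUinv_eq, Matrix.mul_smul, Matrix.smul_mul, ← hspecthm]
    rw [h1t, Matrix.exp_conj' D (t • S) hDunit, h2t,
      Matrix.exp_conj U (t • Matrix.diagonal μ) hUunit, hexpdiag, hDinv_eq, hUinv_eq]
  -- entrywise formula for the semigroup applied to w1
  have hEF : ∀ (t : ℝ) (x : Ω), (exp (t • L0)).mulVec w1 x
      = ∑ i, (d x)⁻¹ * (U x i * (Real.exp (t * μ i) * b i)) := by
    intro t x
    rw [hexp t]
    have hg : D.mulVec w1 = fun y => d y * w1 y := by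
      funext y; rw [hD_def, Matrix.mulVec_diagonal]
    have hsU : (star U).mulVec (fun y => d y * w1 y) = fun i => b i := by
      funext i
      rw [Matrix.mulVec, dotProduct, hb_def]
      refine Finset.sum_congr rfl fun y _ => ?_
      rw [Matrix.star_apply, star_trivial]
    have hX : (U * Matrix.diagonal (fun i => Real.exp (t * μ i)) * star U).mulVec
        (fun y => d y * w1 y) = fun x => ∑ i, U x i * (Real.exp (t * μ i) * b i) := by
      rw [← Matrix.mulVec_mulVec, ← Matrix.mulVec_mulVec, hsU]
      have hE : (Matrix.diagonal fun i => Real.exp (t * μ i)).mulVec (fun i => b i)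
          = fun i => Real.exp (t * μ i) * b i := by
        funext i; rw [Matrix.mulVec_diagonal]
      rw [hE]
      rfl
    rw [← Matrix.mulVec_mulVec, ← Matrix.mulVec_mulVec, hg, hX, hDinv_def,
      Matrix.mulVec_diagonal, Finset.mul_sum]
  -- exponential integrals
  have hexpint : ∀ m : ℝ, m < 0 →
      IntegrableOn (fun t => Real.exp (t * m)) (Set.Ioi (0:ℝ)) := by
    intro m hm
    have h1' : (fun t : ℝ => Real.exp (t * m)) = fun t => Real.exp (-(-m) * t) := by
      funext t; ring_nf
    rw [h1']
    exact exp_neg_integrableOn_Ioi 0 (by linarith)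
  have hexpval : ∀ m : ℝ, m < 0 → ∫ t in Set.Ioi (0:ℝ), Real.exp (t * m) = -m⁻¹ := by
    intro m hm
    have hderiv' : ∀ t ∈ Set.Ioi (0:ℝ), HasDerivAt (fun t => m⁻¹ * Real.exp (t * m))
        (Real.exp (t * m)) t := by
      intro t _
      have hmne : m ≠ 0 := ne_of_lt hm
      have h := ((hasDerivAt_id t).mul_const m).exp.const_mul m⁻¹
      simp only [id_eq, one_mul] at h
      have : m⁻¹ * (Real.exp (t * m) * m) = Real.exp (t * m) := by
        field_simp
      rwa [this] at h
    have hcont : ContinuousWithinAt (fun t => m⁻¹ * Real.exp (t * m)) (Set.Ici 0) 0 :=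
      (continuous_const.mul (Real.continuous_exp.comp
        (continuous_id.mul continuous_const))).continuousWithinAt
    have htend : Filter.Tendsto (fun t => m⁻¹ * Real.exp (t * m))
        Filter.atTop (nhds 0) := by
      have h2 : Filter.Tendsto (fun t : ℝ => t * m) Filter.atTop Filter.atBot :=
        Filter.Tendsto.atTop_mul_const_of_neg hm Filter.tendsto_id
      have h3 : Filter.Tendsto (fun t : ℝ => Real.exp (t * m)) Filter.atTop (nhds 0) :=
        Real.tendsto_exp_atBot.comp h2
      have h4 := h3.const_mul m⁻¹
      simpa using h4
    have hFTC := MeasureTheory.integral_Ioi_of_hasDerivAt_of_tendsto hcont hderiv'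
      (hexpint m hm) htend
    rw [hFTC]
    simp
  -- conclude
  intro x
  have hintg : ∀ i : Ω, IntegrableOn
      (fun t => (d x)⁻¹ * (U x i * (Real.exp (t * μ i) * b i))) (Set.Ioi (0:ℝ)) := by
    intro i
    rcases hcase i with hneg | ⟨hz, c, hc⟩
    · have h0 := (hexpint (μ i) hneg).const_mul ((d x)⁻¹ * U x i * b i)
      have e : (fun t => (d x)⁻¹ * (U x i * (Real.exp (t * μ i) * b i)))
          = fun t => ((d x)⁻¹ * U x i * b i) * Real.exp (t * μ i) := by funext t; ring
      rw [e]; exact h0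
    · have hb0 := (hcoef0 i c hc).1
      have e : (fun t => (d x)⁻¹ * (U x i * (Real.exp (t * μ i) * b i)))
          = fun _ => (0:ℝ) := by
        funext t; rw [hb0]; ring
      rw [e]
      exact integrableOn_zero
  have hval : ∀ i : Ω,
      -β * ∫ t in Set.Ioi (0:ℝ), (d x)⁻¹ * (U x i * (Real.exp (t * μ i) * b i))
      = (d x)⁻¹ * (U x i * a i) := by
    intro i
    rcases hcase i with hneg | ⟨hz, c, hc⟩
    · have e : (fun t => (d x)⁻¹ * (U x i * (Real.exp (t * μ i) * b i)))
          = fun t => ((d x)⁻¹ * U x i * b i) * Real.exp (t * μ i) := by funext t; ring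
      rw [e, MeasureTheory.integral_const_mul, hexpval (μ i) hneg]
      have ha := hμab i
      have hμne : μ i ≠ 0 := ne_of_lt hneg
      have ha' : β * b i * (μ i)⁻¹ = a i := by
        field_simp
        linear_combination -ha
      linear_combination ((d x)⁻¹ * U x i) * ha'
    · have hb0 := (hcoef0 i c hc).1
      have ha0 := (hcoef0 i c hc).2
      have e : (fun t => (d x)⁻¹ * (U x i * (Real.exp (t * μ i) * b i)))
          = fun _ => (0:ℝ) := by
        funext t; rw [hb0]; ring
      rw [e, ha0]
      simp
  calc h1 x = ∑ i, (d x)⁻¹ * (U x i * a i) := hrep x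
    _ = ∑ i, -β * ∫ t in Set.Ioi (0:ℝ),
          (d x)⁻¹ * (U x i * (Real.exp (t * μ i) * b i)) :=
        Finset.sum_congr rfl fun i _ => (hval i).symm
    _ = -β * ∑ i, ∫ t in Set.Ioi (0:ℝ),
          (d x)⁻¹ * (U x i * (Real.exp (t * μ i) * b i)) := by
        rw [Finset.mul_sum]
    _ = -β * ∫ t in Set.Ioi (0:ℝ), (exp (t • L0)).mulVec w1 x := by
        congr 1
        rw [show (fun t => (exp (t • L0)).mulVec w1 x)
            = fun t => ∑ i, (d x)⁻¹ * (U x i * (Real.exp (t * μ i) * b i)) from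
          funext fun t => hEF t x]
        exact (MeasureTheory.integral_finset_sum _ (fun i _ => hintg i)).symm
end

section
/- Transient fluctuation symmetry (discrete-time version): Let P be a stochastic matrix on a finite state space, ρ0 > 0 a probability density, and define for a path ω = (x_0,…,x_n) with all P-transition probabilities positive, S(ω) = log[ρ0(x_0)∏_k P(x_k,x_{k+1})] − log[ρ0(x_n)∏_k P(x_{k+1},x_k)]. Then for every function f on paths, E_{ρ0}[f] = E_{ρ0}[ (f∘θ) · e^{−S} ], where E_{ρ0} is expectation over the chain with transition matrix P started from ρ0, and θ is path reversal. -/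
/-- Transient fluctuation symmetry (discrete time):
`E_{ρ0}[f] = E_{ρ0}[(f∘θ) e^{−S}]`. -/
theorem transient_fluctuation_symmetry
    {Ω : Type*} [Fintype Ω] [DecidableEq Ω]
    (n : ℕ)
    (P : Ω → Ω → ℝ) (hP : ∀ x y, 0 < P x y) (hstoch : ∀ x, ∑ y, P x y = 1)
    (ρ0 : Ω → ℝ) (hρ0 : ∀ x, 0 < ρ0 x) (hnorm : ∑ x, ρ0 x = 1)
    (θ : (Fin (n + 1) → Ω) → (Fin (n + 1) → Ω))
    (hθ : ∀ σ i, θ σ i = σ i.rev)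
    (S : (Fin (n + 1) → Ω) → ℝ)
    (hS : ∀ σ : Fin (n + 1) → Ω, S σ =
      Real.log (ρ0 (σ 0) * ∏ k : Fin n, P (σ k.castSucc) (σ k.succ))
      - Real.log (ρ0 (σ (Fin.last n)) * ∏ k : Fin n, P (σ k.succ) (σ k.castSucc)))
    (f : (Fin (n + 1) → Ω) → ℝ) :
    ∑ σ : Fin (n + 1) → Ω,
        (ρ0 (σ 0) * ∏ k : Fin n, P (σ k.castSucc) (σ k.succ)) * f σ
      = ∑ σ : Fin (n + 1) → Ω,
        (ρ0 (σ 0) * ∏ k : Fin n, P (σ k.castSucc) (σ k.succ))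
          * f (θ σ) * Real.exp (- S σ) := by
  -- weight of reversed path
  have key : ∀ σ : Fin (n + 1) → Ω,
      ρ0 ((θ σ) 0) * ∏ k : Fin n, P ((θ σ) k.castSucc) ((θ σ) k.succ)
      = ρ0 (σ (Fin.last n)) * ∏ k : Fin n, P (σ k.succ) (σ k.castSucc) := by
    intro σ
    have h0 : (θ σ) 0 = σ (Fin.last n) := by
      rw [hθ, Fin.rev_zero]
    rw [h0]
    congr 1
    refine Fintype.prod_equiv (Fin.revPerm) _ _ fun k => ?_
    simp only [Fin.revPerm_apply, hθ, Fin.rev_castSucc, Fin.rev_succ]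
  have hApos : ∀ σ : Fin (n + 1) → Ω,
      0 < ρ0 (σ 0) * ∏ k : Fin n, P (σ k.castSucc) (σ k.succ) :=
    fun σ => mul_pos (hρ0 _) (Finset.prod_pos fun k _ => hP _ _)
  have hBpos : ∀ σ : Fin (n + 1) → Ω,
      0 < ρ0 (σ (Fin.last n)) * ∏ k : Fin n, P (σ k.succ) (σ k.castSucc) :=
    fun σ => mul_pos (hρ0 _) (Finset.prod_pos fun k _ => hP _ _)
  have hterm : ∀ σ : Fin (n + 1) → Ω,
      (ρ0 (σ 0) * ∏ k : Fin n, P (σ k.castSucc) (σ k.succ))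
        * f (θ σ) * Real.exp (- S σ)
      = (ρ0 ((θ σ) 0) * ∏ k : Fin n, P ((θ σ) k.castSucc) ((θ σ) k.succ)) * f (θ σ) := by
    intro σ
    rw [key σ, hS σ, neg_sub, Real.exp_sub, Real.exp_log (hBpos σ), Real.exp_log (hApos σ)]
    have h1 := (hρ0 (σ 0)).ne'
    have h2 : (∏ k : Fin n, P (σ k.castSucc) (σ k.succ)) ≠ 0 := (Finset.prod_pos fun k _ => hP _ _).ne'
    field_simp
  rw [Finset.sum_congr rfl fun σ _ => hterm σ]
  -- change of variables via the involution θ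
  have hinv : Function.Involutive θ := by
    intro σ; funext i; rw [hθ, hθ, Fin.rev_rev]
  exact (Fintype.sum_bijective θ hinv.bijective _ _ (fun σ => rfl)).symm
end

section
/- As a corollary of the transient fluctuation symmetry, the distribution at time n of the chain started from ρ0 satisfies ρ_n(x) = ρ0(x) · E_x[e^{−S}], where E_x is the expectation over paths of length n started from the fixed state x and S is the time-antisymmetric action S(ω) = log[ρ0(x_0)∏_k P(x_k,x_{k+1})] − log[ρ0(x_n)∏_k P(x_{k+1},x_k)]. -/
/-- Corollary of the transient fluctuation symmetry:
`ρ_n(x) = ρ0(x) E_x[e^{−S}]`. -/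
theorem time_n_density_from_fluctuation_symmetry
    {Ω : Type*} [Fintype Ω] [DecidableEq Ω]
    (n : ℕ)
    (P : Ω → Ω → ℝ) (hP : ∀ x y, 0 < P x y) (hstoch : ∀ x, ∑ y, P x y = 1)
    (ρ0 : Ω → ℝ) (hρ0 : ∀ x, 0 < ρ0 x) (hnorm : ∑ x, ρ0 x = 1)
    (S : (Fin (n + 1) → Ω) → ℝ)
    (hS : ∀ σ : Fin (n + 1) → Ω, S σ =
      Real.log (ρ0 (σ 0) * ∏ k : Fin n, P (σ k.castSucc) (σ k.succ))
      - Real.log (ρ0 (σ (Fin.last n)) * ∏ k : Fin n, P (σ k.succ) (σ k.castSucc)))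
    (x : Ω) :
    (∑ σ : Fin (n + 1) → Ω, if σ (Fin.last n) = x then
        ρ0 (σ 0) * ∏ k : Fin n, P (σ k.castSucc) (σ k.succ) else 0)
      = ρ0 x * ∑ σ : Fin (n + 1) → Ω, if σ 0 = x then
          (∏ k : Fin n, P (σ k.castSucc) (σ k.succ)) * Real.exp (- S σ) else 0 := by
  have hfwd : ∀ σ : Fin (n + 1) → Ω, 0 < ∏ k : Fin n, P (σ k.castSucc) (σ k.succ) :=
    fun σ => Finset.prod_pos fun k _ => hP _ _
  have hbwd : ∀ σ : Fin (n + 1) → Ω, 0 < ∏ k : Fin n, P (σ k.succ) (σ k.castSucc) :=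
    fun σ => Finset.prod_pos fun k _ => hP _ _
  -- rewrite RHS summand
  have key : ∀ σ : Fin (n + 1) → Ω, σ 0 = x →
      ρ0 x * ((∏ k : Fin n, P (σ k.castSucc) (σ k.succ)) * Real.exp (- S σ))
      = ρ0 (σ (Fin.last n)) * ∏ k : Fin n, P (σ k.succ) (σ k.castSucc) := by
    intro σ h0
    have hA : 0 < ρ0 (σ 0) * ∏ k : Fin n, P (σ k.castSucc) (σ k.succ) :=
      mul_pos (hρ0 _) (hfwd σ)
    have hB : 0 < ρ0 (σ (Fin.last n)) * ∏ k : Fin n, P (σ k.succ) (σ k.castSucc) :=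
      mul_pos (hρ0 _) (hbwd σ)
    rw [hS σ, neg_sub, Real.exp_sub, Real.exp_log hB, Real.exp_log hA, ← h0]
    field_simp
    have h1 := (hρ0 (σ 0)).ne'
    have h2 := (hfwd σ).ne'
    field_simp
  rw [Finset.mul_sum]
  have hR : ∀ σ : Fin (n + 1) → Ω,
      ρ0 x * (if σ 0 = x then
          (∏ k : Fin n, P (σ k.castSucc) (σ k.succ)) * Real.exp (- S σ) else 0)
      = (if σ 0 = x then ρ0 (σ (Fin.last n)) * ∏ k : Fin n, P (σ k.succ) (σ k.castSucc)
          else 0) := by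
    intro σ
    by_cases h : σ 0 = x
    · simp only [h, if_true]; exact key σ h
    · simp [h]
  simp only [hR]
  -- time reversal bijection
  refine Finset.sum_nbij' (fun σ => σ ∘ Fin.rev) (fun σ => σ ∘ Fin.rev) (by simp) (by simp)
    (fun σ _ => by ext k; simp [Function.comp, Fin.rev_rev])
    (fun σ _ => by ext k; simp [Function.comp, Fin.rev_rev]) ?_
  intro σ _
  have h0 : (σ ∘ Fin.rev) 0 = σ (Fin.last n) := by simp [Function.comp, Fin.rev_zero]
  have hl : (σ ∘ Fin.rev) (Fin.last n) = σ 0 := by simp [Function.comp, Fin.rev_last]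
  have hprod : ∏ k : Fin n, P ((σ ∘ Fin.rev) k.succ) ((σ ∘ Fin.rev) k.castSucc)
      = ∏ k : Fin n, P (σ k.castSucc) (σ k.succ) := by
    refine Fintype.prod_equiv Fin.revPerm _ _ fun k => ?_
    simp [Function.comp, Fin.rev_succ, Fin.rev_castSucc]
  rw [h0, hl, hprod]
end

section
/- Generalized McLennan formula in terms of entropy flux and traffic: for strictly positive stochastic matrices P and P0 on a finite state space, with P0 reversible with respect to ρ0 > 0, the time-n distribution of the P-chain started from ρ0 satisfies ρ_n(x) = ρ0(x) · E^0_x[exp(−(S + T)/2)], where E^0_x is expectation over the P0-chain (equilibrium reference) started from x, S = A∘θ − A, T = A∘θ + A, and A(ω) = −∑_k log(P(x_k,x_{k+1})/P0(x_k,x_{k+1})). -/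
/-- Reversal of a path product. -/
lemma rev_prod_aux {Ω : Type*} (n : ℕ) (σ : Fin (n + 1) → Ω) (Q : Ω → Ω → ℝ) :
    (∏ k : Fin n, Q (σ (k.castSucc).rev) (σ (k.succ).rev))
      = ∏ k : Fin n, Q (σ k.succ) (σ k.castSucc) := by
  rw [← Equiv.prod_comp (Fin.revPerm) (fun k : Fin n => Q (σ k.succ) (σ k.castSucc))]
  refine Finset.prod_congr rfl fun k _ => ?_
  simp [Fin.rev_castSucc, Fin.rev_succ]

/-- Detailed balance along a path. -/
lemma db_path_aux {Ω : Type*} (P0 : Ω → Ω → ℝ) (ρ0 : Ω → ℝ)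
    (hrev : ∀ x y, ρ0 x * P0 x y = ρ0 y * P0 y x) :
    ∀ (n : ℕ) (σ : Fin (n + 1) → Ω),
      ρ0 (σ 0) * ∏ k : Fin n, P0 (σ k.castSucc) (σ k.succ)
        = ρ0 (σ (Fin.last n)) * ∏ k : Fin n, P0 (σ k.succ) (σ k.castSucc) := by
  intro n
  induction n with
  | zero => intro σ; simp [Fin.last]
  | succ m ih =>
    intro σ
    have h1 := ih (σ ∘ Fin.succ)
    have hfwd : (∏ k : Fin (m + 1), P0 (σ k.castSucc) (σ k.succ))
        = P0 (σ 0) (σ 1) *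
          ∏ k : Fin m, P0 ((σ ∘ Fin.succ) k.castSucc) ((σ ∘ Fin.succ) k.succ) := by
      rw [Fin.prod_univ_succ]
      congr 1
    have hbwd : (∏ k : Fin (m + 1), P0 (σ k.succ) (σ k.castSucc))
        = P0 (σ 1) (σ 0) *
          ∏ k : Fin m, P0 ((σ ∘ Fin.succ) k.succ) ((σ ∘ Fin.succ) k.castSucc) := by
      rw [Fin.prod_univ_succ]
      congr 1
    have hlast : (σ ∘ Fin.succ) (Fin.last m) = σ (Fin.last (m + 1)) := by
      simp [Function.comp, Fin.succ_last]
    have h0 : (σ ∘ Fin.succ) 0 = σ 1 := by simp [Function.comp]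
    rw [hfwd, hbwd]
    calc ρ0 (σ 0) * (P0 (σ 0) (σ 1) *
          ∏ k : Fin m, P0 ((σ ∘ Fin.succ) k.castSucc) ((σ ∘ Fin.succ) k.succ))
        = (ρ0 (σ 0) * P0 (σ 0) (σ 1)) *
          ∏ k : Fin m, P0 ((σ ∘ Fin.succ) k.castSucc) ((σ ∘ Fin.succ) k.succ) := by ring
      _ = (ρ0 (σ 1) * P0 (σ 1) (σ 0)) *
          ∏ k : Fin m, P0 ((σ ∘ Fin.succ) k.castSucc) ((σ ∘ Fin.succ) k.succ) := by
            rw [hrev]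
      _ = P0 (σ 1) (σ 0) * (ρ0 ((σ ∘ Fin.succ) 0) *
          ∏ k : Fin m, P0 ((σ ∘ Fin.succ) k.castSucc) ((σ ∘ Fin.succ) k.succ)) := by
            rw [h0]; ring
      _ = P0 (σ 1) (σ 0) * (ρ0 ((σ ∘ Fin.succ) (Fin.last m)) *
          ∏ k : Fin m, P0 ((σ ∘ Fin.succ) k.succ) ((σ ∘ Fin.succ) k.castSucc)) := by
            rw [h1]
      _ = ρ0 (σ (Fin.last (m + 1))) * (P0 (σ 1) (σ 0) *
          ∏ k : Fin m, P0 ((σ ∘ Fin.succ) k.succ) ((σ ∘ Fin.succ) k.castSucc)) := by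
            rw [hlast]; ring

/-- Generalized McLennan formula:
`ρ_n(x) = ρ0(x) E^0_x[exp(−(S+T)/2)]`, with the expectation under the
equilibrium reference chain `P0` started from `x`. -/
theorem generalized_mclennan_formula
    {Ω : Type*} [Fintype Ω] [DecidableEq Ω]
    (n : ℕ)
    (P P0 : Ω → Ω → ℝ)
    (hP : ∀ x y, 0 < P x y) (hP0 : ∀ x y, 0 < P0 x y)
    (hstoch : ∀ x, ∑ y, P x y = 1) (hstoch0 : ∀ x, ∑ y, P0 x y = 1)
    (ρ0 : Ω → ℝ) (hρ0 : ∀ x, 0 < ρ0 x)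
    (hrev : ∀ x y, ρ0 x * P0 x y = ρ0 y * P0 y x)
    (θ : (Fin (n + 1) → Ω) → (Fin (n + 1) → Ω))
    (hθ : ∀ σ i, θ σ i = σ i.rev)
    (A S T : (Fin (n + 1) → Ω) → ℝ)
    (hA : ∀ σ : Fin (n + 1) → Ω, A σ =
      - ∑ k : Fin n, Real.log (P (σ k.castSucc) (σ k.succ) / P0 (σ k.castSucc) (σ k.succ)))
    (hS : ∀ σ, S σ = A (θ σ) - A σ) (hT : ∀ σ, T σ = A (θ σ) + A σ)
    (x : Ω) :
    (∑ σ : Fin (n + 1) → Ω, if σ (Fin.last n) = x then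
        ρ0 (σ 0) * ∏ k : Fin n, P (σ k.castSucc) (σ k.succ) else 0)
      = ρ0 x * ∑ σ : Fin (n + 1) → Ω, if σ 0 = x then
          (∏ k : Fin n, P0 (σ k.castSucc) (σ k.succ))
            * Real.exp (- (S σ + T σ) / 2) else 0 := by
  have hinv : Function.Involutive θ := by
    intro σ; funext i; rw [hθ, hθ, Fin.rev_rev]
  rw [Finset.mul_sum,
    ← Equiv.sum_comp (hinv.toPerm θ)
      (fun σ : Fin (n + 1) → Ω => if σ (Fin.last n) = x then
        ρ0 (σ 0) * ∏ k : Fin n, P (σ k.castSucc) (σ k.succ) else 0)]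
  refine Finset.sum_congr rfl fun σ _ => ?_
  show (if (θ σ) (Fin.last n) = x then
      ρ0 ((θ σ) 0) * ∏ k : Fin n, P ((θ σ) k.castSucc) ((θ σ) k.succ) else 0) = _
  have hc : (θ σ) (Fin.last n) = σ 0 := by rw [hθ, Fin.rev_last]
  rw [hc]
  by_cases h : σ 0 = x
  · rw [if_pos h, if_pos h]
    have h0' : θ σ 0 = σ (Fin.last n) := by rw [hθ, Fin.rev_zero]
    have hPprod : (∏ k : Fin n, P ((θ σ) k.castSucc) ((θ σ) k.succ))
        = ∏ k : Fin n, P (σ k.succ) (σ k.castSucc) := by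
      simp only [hθ]; exact rev_prod_aux n σ P
    have hexp : Real.exp (-(S σ + T σ) / 2)
        = ∏ k : Fin n, P (σ k.succ) (σ k.castSucc) / P0 (σ k.succ) (σ k.castSucc) := by
      have harg : -(S σ + T σ) / 2 = ∑ k : Fin n,
          Real.log (P ((θ σ) k.castSucc) ((θ σ) k.succ)
            / P0 ((θ σ) k.castSucc) ((θ σ) k.succ)) := by
        rw [hS, hT, hA (θ σ)]; ring
      rw [harg, Real.exp_sum]
      have hre := rev_prod_aux n σ
        (fun a b => Real.exp (Real.log (P a b / P0 a b)))
      simp only [hθ]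
      rw [hre]
      refine Finset.prod_congr rfl fun k _ => ?_
      rw [Real.exp_log (div_pos (hP _ _) (hP0 _ _))]
    have hdb := db_path_aux P0 ρ0 hrev n σ
    rw [h0', hPprod, hexp, ← h, ← mul_assoc, hdb, mul_assoc,
      ← Finset.prod_mul_distrib]
    congr 1
    refine Finset.prod_congr rfl fun k _ => ?_
    rw [mul_div_cancel₀ _ (hP0 _ _).ne']
  · rw [if_neg h, if_neg h, mul_zero]
end

section
/- Onsager reciprocity (finite-state version): with L0 self-adjoint in the ρ0-inner product and invertible on the zero-mean subspace, define for antisymmetric forcings F, G the functions w^F(x) = ∑_{y≠x}λ0(x,y)F(x,y), h^F = L0^{-1}w^F, and linear response currents j^F(x,y) = γ(x,y)(F(x,y) + h^F(x) − h^F(y)) with γ(x,y) = ρ0(x)λ0(x,y). Then (1/2)∑_{x,y} G(x,y) j^F(x,y) = (1/2)∑_{x,y} F(x,y) j^G(x,y). -/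
/-- Self-adjointness of `L0` in the `ρ0`-inner product (detailed balance). -/
lemma onsager_key {Ω : Type*} [Fintype Ω]
    (lam0 : Ω → Ω → ℝ) (ρ0 : Ω → ℝ)
    (hdb : ∀ x y, ρ0 x * lam0 x y = ρ0 y * lam0 y x) (f g : Ω → ℝ) :
    ∑ x, ρ0 x * f x * ∑ y, lam0 x y * (g y - g x)
      = ∑ x, ρ0 x * g x * ∑ y, lam0 x y * (f y - f x) := by
  have expand : ∀ h k : Ω → ℝ,
      ∑ x, ρ0 x * h x * ∑ y, lam0 x y * (k y - k x)
        = (∑ x, ∑ y, ρ0 x * lam0 x y * h x * k y)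
          - ∑ x, ∑ y, ρ0 x * lam0 x y * h x * k x := by
    intro h k
    rw [← Finset.sum_sub_distrib]
    refine Finset.sum_congr rfl fun x _ => ?_
    rw [Finset.mul_sum, ← Finset.sum_sub_distrib]
    exact Finset.sum_congr rfl fun y _ => by ring
  have cross : ∑ x, ∑ y, ρ0 x * lam0 x y * f x * g y
      = ∑ x, ∑ y, ρ0 x * lam0 x y * g x * f y := by
    rw [Finset.sum_comm]
    refine Finset.sum_congr rfl fun x _ => Finset.sum_congr rfl fun y _ => ?_
    linear_combination f y * g x * hdb y x
  rw [expand, expand, cross]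
  congr 1
  exact Finset.sum_congr rfl fun x _ => Finset.sum_congr rfl fun y _ => by ring

/-- Splitting of the response pairing into symmetric part and coupling part. -/
lemma onsager_split {Ω : Type*} [Fintype Ω]
    (lam0 : Ω → Ω → ℝ) (ρ0 : Ω → ℝ)
    (hdb : ∀ x y, ρ0 x * lam0 x y = ρ0 y * lam0 y x)
    (P Q : Ω → Ω → ℝ) (hQ : ∀ x y, Q x y = - Q y x) (hp : Ω → ℝ) :
    ∑ x, ∑ y, Q x y * (ρ0 x * lam0 x y * (P x y + hp x - hp y))
      = (∑ x, ∑ y, ρ0 x * lam0 x y * Q x y * P x y)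
        + 2 * ∑ x, ρ0 x * hp x * ∑ y, lam0 x y * Q x y := by
  have hU : ∑ x, ρ0 x * hp x * ∑ y, lam0 x y * Q x y
      = ∑ x, ∑ y, ρ0 x * lam0 x y * Q x y * hp x := by
    refine Finset.sum_congr rfl fun x _ => ?_
    rw [Finset.mul_sum]
    exact Finset.sum_congr rfl fun y _ => by ring
  have flip : ∑ x, ∑ y, ρ0 x * lam0 x y * Q x y * hp y
      = ∑ x, ∑ y, -(ρ0 x * lam0 x y * Q x y * hp x) := by
    rw [Finset.sum_comm]
    refine Finset.sum_congr rfl fun x _ => Finset.sum_congr rfl fun y _ => ?_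
    linear_combination hp x * Q y x * hdb y x + ρ0 x * lam0 x y * hp x * hQ x y
  have hS : (∑ x, ∑ y, ρ0 x * lam0 x y * Q x y * P x y)
        + (∑ x, ∑ y, ρ0 x * lam0 x y * Q x y * hp x)
        - (∑ x, ∑ y, ρ0 x * lam0 x y * Q x y * hp y)
      = ∑ x, ∑ y, Q x y * (ρ0 x * lam0 x y * (P x y + hp x - hp y)) := by
    simp only [← Finset.sum_add_distrib, ← Finset.sum_sub_distrib]
    exact Finset.sum_congr rfl fun x _ => Finset.sum_congr rfl fun y _ => by ring
  have hneg : ∑ x, ∑ y, -(ρ0 x * lam0 x y * Q x y * hp x)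
      = -∑ x, ∑ y, ρ0 x * lam0 x y * Q x y * hp x := by
    simp
  rw [hU]
  rw [← hS, flip, hneg]
  ring

/-- Onsager reciprocity for the linear response currents
`j^F(x,y) = γ(x,y)(F(x,y) + h^F(x) − h^F(y))`, `h^F = L0^{-1} w^F`. -/
theorem onsager_reciprocity
    {Ω : Type*} [Fintype Ω] [DecidableEq Ω]
    (lam0 : Ω → Ω → ℝ) (hlam0 : ∀ x y, 0 ≤ lam0 x y)
    (ρ0 : Ω → ℝ) (hρ0 : ∀ x, 0 < ρ0 x)
    (hdb : ∀ x y, ρ0 x * lam0 x y = ρ0 y * lam0 y x)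
    (F G : Ω → Ω → ℝ)
    (hF : ∀ x y, F x y = - F y x) (hG : ∀ x y, G x y = - G y x)
    (hF' hG' : Ω → ℝ)
    -- `h^F = L0⁻¹ w^F` on the zero-mean subspace, i.e. `L0 h^F = w^F`, `∑ ρ0 h^F = 0`
    (hhF : ∀ x, ∑ y ∈ Finset.univ.erase x, lam0 x y * (hF' y - hF' x)
        = ∑ y ∈ Finset.univ.erase x, lam0 x y * F x y)
    (hhG : ∀ x, ∑ y ∈ Finset.univ.erase x, lam0 x y * (hG' y - hG' x)
        = ∑ y ∈ Finset.univ.erase x, lam0 x y * G x y)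
    (hFmean : ∑ x, ρ0 x * hF' x = 0) (hGmean : ∑ x, ρ0 x * hG' x = 0) :
    (1 / 2) * ∑ x, ∑ y, G x y * (ρ0 x * lam0 x y * (F x y + hF' x - hF' y))
      = (1 / 2) * ∑ x, ∑ y, F x y * (ρ0 x * lam0 x y * (G x y + hG' x - hG' y)) := by
  -- extend the `erase`-sums to full sums (the diagonal term vanishes)
  have wF : ∀ x, ∑ y, lam0 x y * F x y = ∑ y, lam0 x y * (hF' y - hF' x) := by
    intro x
    have h0 : F x x = 0 := by have := hF x x; linarith
    have h1 : lam0 x x * F x x = 0 := by rw [h0, mul_zero]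
    have h2 : lam0 x x * (hF' x - hF' x) = 0 := by ring
    have e1 : ∑ y ∈ Finset.univ.erase x, lam0 x y * F x y
        = ∑ y, lam0 x y * F x y := Finset.sum_erase _ h1
    have e2 : ∑ y ∈ Finset.univ.erase x, lam0 x y * (hF' y - hF' x)
        = ∑ y, lam0 x y * (hF' y - hF' x) := Finset.sum_erase _ h2
    rw [← e1, ← e2]
    exact (hhF x).symm
  have wG : ∀ x, ∑ y, lam0 x y * G x y = ∑ y, lam0 x y * (hG' y - hG' x) := by
    intro x
    have h0 : G x x = 0 := by have := hG x x; linarith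
    have h1 : lam0 x x * G x x = 0 := by rw [h0, mul_zero]
    have h2 : lam0 x x * (hG' x - hG' x) = 0 := by ring
    have e1 : ∑ y ∈ Finset.univ.erase x, lam0 x y * G x y
        = ∑ y, lam0 x y * G x y := Finset.sum_erase _ h1
    have e2 : ∑ y ∈ Finset.univ.erase x, lam0 x y * (hG' y - hG' x)
        = ∑ y, lam0 x y * (hG' y - hG' x) := Finset.sum_erase _ h2
    rw [← e1, ← e2]
    exact (hhG x).symm
  rw [onsager_split lam0 ρ0 hdb F G hG hF', onsager_split lam0 ρ0 hdb G F hF hG']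
  congr 1
  congr 1
  · exact Finset.sum_congr rfl fun x _ => Finset.sum_congr rfl fun y _ => by ring
  · congr 1
    calc ∑ x, ρ0 x * hF' x * ∑ y, lam0 x y * G x y
        = ∑ x, ρ0 x * hF' x * ∑ y, lam0 x y * (hG' y - hG' x) := by
          exact Finset.sum_congr rfl fun x _ => by rw [wG x]
      _ = ∑ x, ρ0 x * hG' x * ∑ y, lam0 x y * (hF' y - hF' x) :=
          onsager_key lam0 ρ0 hdb hF' hG'
      _ = ∑ x, ρ0 x * hG' x * ∑ y, lam0 x y * F x y := by
          exact Finset.sum_congr rfl fun x _ => by rw [wF x]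
end
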